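/- Let 0 < δ < 1 and let X(δ) = {x ∈ ℝⁿ : dist(x, X) < δ}. Then for every a, b ∈ E and every x ∈ X(δ): x + b ≠ 0, φ_b(x) + a ≠ 0, and φ_a(φ_b(x)) ∈ X. Consequently, for every finite word w = w₁…w_m of letters in E with m ≥ 2, the composition φ_w = φ_{w₁} ∘ ⋯ ∘ φ_{w_m} maps X(δ) into X(δ). -/

import Mathlib

open scoped RealInnerProductSpace

/-- The alphabet of the `n`-dimensional continued fraction system. -/
def cfAlphabet (n : ℕ) [NeZero n] : Set (EuclideanSpace ℝ (Fin n)) :=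
  {e | (∃ k : ℕ, 0 < k ∧ e 0 = k) ∧ ∀ i : Fin n, i ≠ 0 → ∃ m : ℤ, e i = m}

/-- The center `v_{1/2} = (1/2, 0, …, 0)`. -/
noncomputable def cfCenter (n : ℕ) [NeZero n] : EuclideanSpace ℝ (Fin n) :=
  WithLp.toLp 2 (fun i : Fin n => if i = 0 then (1/2 : ℝ) else 0)

/-- The generator `φ_e(x) = (x + e)/|x + e|²`. -/
noncomputable def cfMap {n : ℕ} (e : EuclideanSpace ℝ (Fin n)) (x : EuclideanSpace ℝ (Fin n)) :
    EuclideanSpace ℝ (Fin n) :=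
  (‖x + e‖ ^ 2)⁻¹ • (x + e)

/-- `X(δ) = {x : dist(x, X) < δ}` where `X` is the closed ball of radius `1/2`
centered at `v_{1/2}`. -/
noncomputable def cfNbhd (n : ℕ) [NeZero n] (δ : ℝ) : Set (EuclideanSpace ℝ (Fin n)) :=
  {x | Metric.infDist x (Metric.closedBall (cfCenter n) (1/2)) < δ}

/-- The composition `φ_w = φ_{w₁} ∘ ⋯ ∘ φ_{w_m}` coded by a finite word
`w = w₁…w_m` of letters. -/
noncomputable def cfWordMap {n : ℕ} (w : List (EuclideanSpace ℝ (Fin n))) :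
    EuclideanSpace ℝ (Fin n) → EuclideanSpace ℝ (Fin n) :=
  w.foldr (fun e f => cfMap e ∘ f) id

lemma cf_inner_cfCenter {n : ℕ} [NeZero n] (x : EuclideanSpace ℝ (Fin n)) :
    ⟪x, cfCenter n⟫ = x 0 / 2 := by
  simp [PiLp.inner_apply, cfCenter, mul_ite, Finset.sum_ite_eq']
  ring

lemma cf_mem_X_iff {n : ℕ} [NeZero n] (x : EuclideanSpace ℝ (Fin n)) :
    x ∈ Metric.closedBall (cfCenter n) (1/2) ↔ ‖x‖^2 ≤ x 0 := by
  have h1 : ‖x - cfCenter n‖^2 = ‖x‖^2 - 2 * ⟪x, cfCenter n⟫ + ‖cfCenter n‖^2 :=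
    norm_sub_sq_real x (cfCenter n)
  have h2 : ‖cfCenter n‖^2 = 1/4 := by
    rw [← real_inner_self_eq_norm_sq, cf_inner_cfCenter]
    norm_num [cfCenter]
  rw [cf_inner_cfCenter] at h1
  rw [Metric.mem_closedBall, dist_eq_norm]
  constructor <;> intro h
  · nlinarith [norm_nonneg (x - cfCenter n)]
  · nlinarith [norm_nonneg (x - cfCenter n), sq_nonneg (‖x - cfCenter n‖ - 1/2)]

lemma cfMap_apply0 {n : ℕ} [NeZero n] (e x : EuclideanSpace ℝ (Fin n)) :
    cfMap e x 0 = (‖x + e‖ ^ 2)⁻¹ * (x + e) 0 := rfl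

lemma cf_ne_zero_of_pos0 {n : ℕ} [NeZero n] {y : EuclideanSpace ℝ (Fin n)} (h : 0 < y 0) :
    y ≠ 0 := by
  intro hy; rw [hy] at h; simp at h

lemma cfMap_pos0 {n : ℕ} [NeZero n] {e x : EuclideanSpace ℝ (Fin n)} (h : 0 < (x + e) 0) :
    0 < cfMap e x 0 := by
  have hne : x + e ≠ 0 := cf_ne_zero_of_pos0 h
  have hnorm : 0 < ‖x + e‖ := norm_pos_iff.2 hne
  rw [cfMap_apply0]
  positivity

lemma cfMap_mem_X {n : ℕ} [NeZero n] {e x : EuclideanSpace ℝ (Fin n)} (h : 1 ≤ (x + e) 0) :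
    cfMap e x ∈ Metric.closedBall (cfCenter n) (1/2) := by
  have hne : x + e ≠ 0 := cf_ne_zero_of_pos0 (by linarith)
  have hnorm : 0 < ‖x + e‖ := norm_pos_iff.2 hne
  rw [cf_mem_X_iff, cfMap_apply0]
  have h1 : ‖cfMap e x‖ = (‖x + e‖ ^ 2)⁻¹ * ‖x + e‖ := by
    rw [cfMap, norm_smul, Real.norm_eq_abs, abs_of_pos (by positivity)]
  have h3 : (‖x + e‖ ^ 2)⁻¹ * ‖x + e‖ = ‖x + e‖⁻¹ := by
    field_simp
  have h4 : (0:ℝ) < ‖x + e‖ ^ 2 := by positivity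
  rw [h1, h3]
  calc ‖x + e‖⁻¹ ^ 2 = (‖x + e‖ ^ 2)⁻¹ * 1 := by rw [inv_pow]; ring
    _ ≤ (‖x + e‖ ^ 2)⁻¹ * (x + e) 0 := mul_le_mul_of_nonneg_left h (le_of_lt (inv_pos.2 h4))

lemma cfAlphabet_coord0 {n : ℕ} [NeZero n] {e : EuclideanSpace ℝ (Fin n)}
    (he : e ∈ cfAlphabet n) : 1 ≤ e 0 := by
  obtain ⟨⟨k, hk, hke⟩, -⟩ := he
  rw [hke]
  exact Nat.one_le_cast.mpr hk

lemma cf_coord0_of_mem_X {n : ℕ} [NeZero n] {x : EuclideanSpace ℝ (Fin n)}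
    (hx : x ∈ Metric.closedBall (cfCenter n) (1/2)) : 0 ≤ x 0 := by
  rw [cf_mem_X_iff] at hx
  nlinarith [sq_nonneg ‖x‖]

lemma cf_coord0_of_mem_nbhd {n : ℕ} [NeZero n] {δ : ℝ} (hδ0 : 0 < δ)
    {x : EuclideanSpace ℝ (Fin n)} (hx : x ∈ cfNbhd n δ) : -δ < x 0 := by
  have hne : (Metric.closedBall (cfCenter n) (1/2 : ℝ)).Nonempty :=
    ⟨cfCenter n, Metric.mem_closedBall_self (by norm_num)⟩
  obtain ⟨y, hy, hxy⟩ := (Metric.infDist_lt_iff hne).1 hx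
  have h0 : |x 0 - y 0| ≤ ‖x - y‖ := by
    have h := abs_real_inner_le_norm (EuclideanSpace.single (0 : Fin n) (1:ℝ)) (x - y)
    simpa [real_inner_comm, EuclideanSpace.inner_single_left] using h
  have hy0 : 0 ≤ y 0 := cf_coord0_of_mem_X hy
  rw [dist_eq_norm] at hxy
  have := abs_le.1 h0
  linarith [this.1]

lemma cf_X_subset_nbhd {n : ℕ} [NeZero n] {δ : ℝ} (hδ0 : 0 < δ)
    {x : EuclideanSpace ℝ (Fin n)} (hx : x ∈ Metric.closedBall (cfCenter n) (1/2)) :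
    x ∈ cfNbhd n δ := by
  have : Metric.infDist x (Metric.closedBall (cfCenter n) (1/2)) = 0 :=
    Metric.infDist_zero_of_mem hx
  simp only [cfNbhd, Set.mem_setOf_eq, this]
  exact hδ0

/-- For `0 < δ < 1`: for all `a, b ∈ E` and `x ∈ X(δ)` one has `x + b ≠ 0`,
`φ_b(x) + a ≠ 0` and `φ_a(φ_b(x)) ∈ X`; consequently every composition `φ_w` coded by a
word `w` of length `≥ 2` of letters from `E` maps `X(δ)` into `X(δ)`. -/
theorem cfWordMap_mapsTo_nbhd {n : ℕ} [NeZero n] (hn : 2 ≤ n) (δ : ℝ) (hδ0 : 0 < δ)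
    (hδ1 : δ < 1) :
    (∀ a ∈ cfAlphabet n, ∀ b ∈ cfAlphabet n, ∀ x ∈ cfNbhd n δ,
      x + b ≠ 0 ∧ cfMap b x + a ≠ 0 ∧
        cfMap a (cfMap b x) ∈ Metric.closedBall (cfCenter n) (1/2)) ∧
    (∀ w : List (EuclideanSpace ℝ (Fin n)), (∀ e ∈ w, e ∈ cfAlphabet n) → 2 ≤ w.length →
      ∀ x ∈ cfNbhd n δ, cfWordMap w x ∈ cfNbhd n δ) := by
  have key : ∀ a ∈ cfAlphabet n, ∀ b ∈ cfAlphabet n, ∀ x ∈ cfNbhd n δ,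
      x + b ≠ 0 ∧ cfMap b x + a ≠ 0 ∧
        cfMap a (cfMap b x) ∈ Metric.closedBall (cfCenter n) (1/2) := by
    intro a ha b hb x hx
    have hb0 : 1 ≤ b 0 := cfAlphabet_coord0 hb
    have ha0 : 1 ≤ a 0 := cfAlphabet_coord0 ha
    have hx0 : -δ < x 0 := cf_coord0_of_mem_nbhd hδ0 hx
    have hxb : 0 < (x + b) 0 := by
      have : (x + b) 0 = x 0 + b 0 := rfl
      rw [this]; linarith
    have h1 : 0 < cfMap b x 0 := cfMap_pos0 hxb
    have h2 : 1 ≤ (cfMap b x + a) 0 := by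
      have : (cfMap b x + a) 0 = cfMap b x 0 + a 0 := rfl
      rw [this]; linarith
    exact ⟨cf_ne_zero_of_pos0 hxb, cf_ne_zero_of_pos0 (by linarith),
      cfMap_mem_X h2⟩
  refine ⟨key, ?_⟩
  have keyX : ∀ w : List (EuclideanSpace ℝ (Fin n)), (∀ e ∈ w, e ∈ cfAlphabet n) →
      2 ≤ w.length → ∀ x ∈ cfNbhd n δ,
      cfWordMap w x ∈ Metric.closedBall (cfCenter n) (1/2) := by
    intro w
    induction w with
    | nil => intro _ h; simp at h
    | cons e w ih =>
      intro hall hlen x hx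
      have he : e ∈ cfAlphabet n := hall e List.mem_cons_self
      have hw : ∀ e' ∈ w, e' ∈ cfAlphabet n := fun e' h => hall e' (List.mem_cons_of_mem e h)
      have hcons : cfWordMap (e :: w) x = cfMap e (cfWordMap w x) := rfl
      rw [hcons]
      rcases Nat.lt_or_ge w.length 2 with hl | hl
      · -- w.length = 1 since (e::w).length ≥ 2
        have hw1 : w.length = 1 := by
          simp only [List.length_cons] at hlen
          omega
        obtain ⟨b, rfl⟩ := List.length_eq_one_iff.1 hw1
        have hb : b ∈ cfAlphabet n := hw b (List.mem_singleton_self b)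
        have : cfWordMap [b] x = cfMap b x := rfl
        rw [this]
        exact (key e he b hb x hx).2.2
      · have hmem : cfWordMap w x ∈ Metric.closedBall (cfCenter n) (1/2) := ih hw hl x hx
        apply cfMap_mem_X
        have h0 : 0 ≤ cfWordMap w x 0 := cf_coord0_of_mem_X hmem
        have he0 : 1 ≤ e 0 := cfAlphabet_coord0 he
        have : (cfWordMap w x + e) 0 = cfWordMap w x 0 + e 0 := rfl
        rw [this]; linarith
  intro w hall hlen x hx
  exact cf_X_subset_nbhd hδ0 (keyX w hall hlen x hx)
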